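/- Under the assumptions κ ≥ K > 0 and sup_x 𝒟_x ≤ Λ (Λ ≥ 1), for every probability density ρ with respect to the Perron measure 𝔪 one has W(𝔪, ρ𝔪)² ≤ (Λ²/(2K²)) ℐ(ρ)(1 − ℐ(ρ)/8) ≤ (Λ²/(2K²)) ℐ(ρ), where ℐ(ρ) = 2 Σ_{x,y} (√ρ(y) − √ρ(x))² 𝔪_{xy} is the Fisher information. -/

import Mathlib

open Finset

namespace Chung

variable {V : Type*}

/-- There is a directed path of length `n` from `x` to `y` (edges are pairs of
positive weight). -/
def PathLen (μ : V → V → ℝ) (n : ℕ) (x y : V) : Prop :=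
  ∃ p : ℕ → V, p 0 = x ∧ p n = y ∧ ∀ i < n, 0 < μ (p i) (p (i + 1))

/-- The (non-symmetric) graph distance: the minimal length of a directed path. -/
noncomputable def gdist (μ : V → V → ℝ) (x y : V) : ℝ :=
  (sInf {n : ℕ | PathLen μ n x y} : ℕ)

/-- `(V,μ)` is a simple, strongly connected weighted directed graph. -/
def IsGraph (μ : V → V → ℝ) : Prop :=
  (∀ x y, 0 ≤ μ x y) ∧ (∀ x, μ x x = 0) ∧ (∀ x y, ∃ n, PathLen μ n x y)

variable [Fintype V]

/-- The transition probability kernel `P(x,y) = μ_{xy}/μ(x)`. -/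
noncomputable def ker (μ : V → V → ℝ) (x y : V) : ℝ := μ x y / ∑ z, μ x z

/-- `m` is the Perron (stationary probability) measure of the kernel `P`. -/
def IsPerron (μ : V → V → ℝ) (m : V → ℝ) : Prop :=
  (∀ x, 0 < m x) ∧ (∑ x, m x = 1) ∧ ∀ y, m y = ∑ x, m x * ker μ x y

/-- The mean transition probability kernel `𝒫 = (P + ←P)/2`,
where `←P(x,y) = m(y)P(y,x)/m(x)`. -/
noncomputable def meanKer (μ : V → V → ℝ) (m : V → ℝ) (x y : V) : ℝ :=
  (ker μ x y + m y * ker μ y x / m x) / 2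

variable [DecidableEq V]

/-- The Chung Laplacian `ℒ = I − 𝒫` as a matrix. -/
noncomputable def lapMat (μ : V → V → ℝ) (m : V → ℝ) : Matrix V V ℝ :=
  1 - Matrix.of (meanKer μ m)

/-- The Chung Laplacian applied to a function. -/
noncomputable def lap (μ : V → V → ℝ) (m : V → ℝ) (f : V → ℝ) : V → ℝ :=
  (lapMat μ m).mulVec f

/-- The heat semigroup `P_t = e^{−tℒ}` as a matrix. -/
noncomputable def heatMat (μ : V → V → ℝ) (m : V → ℝ) (t : ℝ) : Matrix V V ℝ :=
  NormedSpace.exp ((-t) • lapMat μ m)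

/-- `P_t f`. -/
noncomputable def heatSG (μ : V → V → ℝ) (m : V → ℝ) (t : ℝ) (f : V → ℝ) : V → ℝ :=
  (heatMat μ m t).mulVec f

/-- The heat kernel measure `p_x^t(y) = m(y)·(P_t δ_x)(y)/m(x)`. -/
noncomputable def heatKer (μ : V → V → ℝ) (m : V → ℝ) (t : ℝ) (x y : V) : ℝ :=
  m y * heatSG μ m t (fun z => if z = x then 1 else 0) y / m x

/-- `π` is a coupling of the probability measures `ν₀` and `ν₁`. -/
def IsCoupling (π : V → V → ℝ) (ν₀ ν₁ : V → ℝ) : Prop :=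
  (∀ x y, 0 ≤ π x y) ∧ (∀ x, ∑ y, π x y = ν₀ x) ∧ (∀ y, ∑ x, π x y = ν₁ y)

/-- Wasserstein distance for the (possibly non-symmetric) cost `d`. -/
noncomputable def wass (d : V → V → ℝ) (ν₀ ν₁ : V → ℝ) : ℝ :=
  sInf {r : ℝ | ∃ π : V → V → ℝ, IsCoupling π ν₀ ν₁ ∧ r = ∑ x, ∑ y, d x y * π x y}

/-- Lipschitz constant with respect to the (non-symmetric) distance `d`. -/
noncomputable def lipConst (d : V → V → ℝ) (f : V → ℝ) : ℝ :=
  sSup {r : ℝ | ∃ x y, x ≠ y ∧ r = (f y - f x) / d x y}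

/-- The Lin–Lu–Yau type Ricci curvature of the directed graph, via the limit-free
formula `κ(x,y) = inf {∇_{xy} ℒf : f 1-Lipschitz, ∇_{xy} f = 1}`. -/
noncomputable def ricci (μ : V → V → ℝ) (m : V → ℝ) (x y : V) : ℝ :=
  sInf {r : ℝ | ∃ f : V → ℝ, (∀ a b, f b - f a ≤ gdist μ a b) ∧
    (f y - f x) / gdist μ x y = 1 ∧
    r = (lap μ m f y - lap μ m f x) / gdist μ x y}


set_option linter.unusedSectionVars false
set_option linter.unusedVariables false
set_option maxHeartbeats 4000000

section Aux

open Filter Topology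

variable [Nonempty V]
variable {μ : V → V → ℝ} {m : V → ℝ} {K Λ : ℝ}

lemma pathLen_trans {μ : V → V → ℝ} {n k : ℕ} {x y z : V}
    (h1 : PathLen μ n x y) (h2 : PathLen μ k y z) : PathLen μ (n + k) x z := by
  obtain ⟨p, hp0, hpn, hp⟩ := h1
  obtain ⟨q, hq0, hqk, hq⟩ := h2
  refine ⟨fun i => if i ≤ n then p i else q (i - n), by simpa using hp0, ?_, ?_⟩
  · by_cases h : k = 0
    · subst h; simpa [hpn, ← hq0] using hqk
    · have : ¬ (n + k ≤ n) := by omega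
      simpa [this] using hqk
  · intro i hi
    rcases lt_trichotomy i n with h | h | h
    · have h1 : i ≤ n := h.le
      have h2 : i + 1 ≤ n := h
      simpa [h1, h2] using hp i h
    · subst h
      by_cases hk0 : i + 1 ≤ i
      · omega
      · simpa [hk0, hpn, ← hq0] using hq 0 (by omega)
    · have h1 : ¬ i ≤ n := by omega
      have h2 : ¬ i + 1 ≤ n := by omega
      have h3 : i + 1 - n = (i - n) + 1 := by omega
      simpa [h1, h2, h3] using hq (i - n) (by omega)

lemma gdist_nonneg (μ : V → V → ℝ) (x y : V) : 0 ≤ gdist μ x y := by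
  exact_mod_cast Nat.cast_nonneg _

lemma gdist_self (μ : V → V → ℝ) (x : V) : gdist μ x x = 0 := by
  have : (0 : ℕ) ∈ {n : ℕ | PathLen μ n x x} := ⟨fun _ => x, rfl, rfl, fun i hi => by omega⟩
  have : sInf {n : ℕ | PathLen μ n x x} = 0 := Nat.sInf_eq_zero.mpr (Or.inl this)
  simp [gdist, this]

lemma gdist_triangle {μ : V → V → ℝ} (hG : IsGraph μ) (x y z : V) :
    gdist μ x z ≤ gdist μ x y + gdist μ y z := by
  have h1 : sInf {n : ℕ | PathLen μ n x y} ∈ {n : ℕ | PathLen μ n x y} :=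
    Nat.sInf_mem (hG.2.2 x y)
  have h2 : sInf {n : ℕ | PathLen μ n y z} ∈ {n : ℕ | PathLen μ n y z} :=
    Nat.sInf_mem (hG.2.2 y z)
  have h3 : sInf {n : ℕ | PathLen μ n x y} + sInf {n : ℕ | PathLen μ n y z}
      ∈ {n : ℕ | PathLen μ n x z} := pathLen_trans h1 h2
  have := Nat.sInf_le h3
  unfold gdist
  exact_mod_cast this

lemma one_le_gdist {μ : V → V → ℝ} (hG : IsGraph μ) {x y : V} (hxy : x ≠ y) :
    1 ≤ gdist μ x y := by
  have hne : {n : ℕ | PathLen μ n x y}.Nonempty := hG.2.2 x y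
  have hmem := Nat.sInf_mem hne
  have h0 : sInf {n : ℕ | PathLen μ n x y} ≠ 0 := by
    intro h
    rw [h] at hmem
    obtain ⟨p, hp0, hpn, -⟩ := hmem
    exact hxy (hp0 ▸ hpn ▸ rfl)
  have : 1 ≤ sInf {n : ℕ | PathLen μ n x y} := Nat.one_le_iff_ne_zero.mpr h0
  unfold gdist
  exact_mod_cast this

def dualCone (d : V → V → ℝ) : Set ((V → ℝ) × (V → ℝ) × ℝ) :=
  {e | ∃ c : V → V → ℝ, ∃ s : ℝ, (∀ x y, 0 ≤ c x y) ∧ 0 ≤ s ∧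
    e.1 = (fun x => ∑ y, c x y) ∧ e.2.1 = (fun y => ∑ x, c x y) ∧
    e.2.2 = (∑ x, ∑ y, d x y * c x y) + s}

lemma dualCone_convex (d : V → V → ℝ) : Convex ℝ (dualCone d) := by
  rintro e ⟨c, s, hc, hs, h1, h2, h3⟩ e' ⟨c', s', hc', hs', h1', h2', h3'⟩ a b ha hb hab
  refine ⟨fun x y => a * c x y + b * c' x y, a * s + b * s', ?_, ?_, ?_, ?_, ?_⟩
  · intro x y
    have := hc x y; have := hc' x y; positivity
  · positivity
  · funext x
    have : (a • e + b • e').1 x = a * e.1 x + b * e'.1 x := rfl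
    rw [this, h1, h1']
    simp [Finset.mul_sum, Finset.sum_add_distrib]
  · funext y
    have : (a • e + b • e').2.1 y = a * e.2.1 y + b * e'.2.1 y := rfl
    rw [this, h2, h2']
    simp [Finset.mul_sum, Finset.sum_add_distrib]
  · have : (a • e + b • e').2.2 = a * e.2.2 + b * e'.2.2 := rfl
    rw [this, h3, h3']
    have key : ∑ x, ∑ y, d x y * (a * c x y + b * c' x y)
        = a * (∑ x, ∑ y, d x y * c x y) + b * (∑ x, ∑ y, d x y * c' x y) := by
      rw [Finset.mul_sum, Finset.mul_sum, ← Finset.sum_add_distrib]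
      refine Finset.sum_congr rfl fun x _ => ?_
      rw [Finset.mul_sum, Finset.mul_sum, ← Finset.sum_add_distrib]
      refine Finset.sum_congr rfl fun y _ => ?_
      ring
    rw [key]; ring

lemma dualCone_smul (d : V → V → ℝ) {e : (V → ℝ) × (V → ℝ) × ℝ} (he : e ∈ dualCone d)
    {t : ℝ} (ht : 0 ≤ t) : t • e ∈ dualCone d := by
  obtain ⟨c, s, hc, hs, h1, h2, h3⟩ := he
  refine ⟨fun x y => t * c x y, t * s, fun x y => by have := hc x y; positivity,
    by positivity, ?_, ?_, ?_⟩
  · funext x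
    have : (t • e).1 x = t * e.1 x := rfl
    rw [this, h1]; simp [Finset.mul_sum]
  · funext y
    have : (t • e).2.1 y = t * e.2.1 y := rfl
    rw [this, h2]; simp [Finset.mul_sum]
  · have : (t • e).2.2 = t * e.2.2 := rfl
    rw [this, h3]
    have key : ∑ x, ∑ y, d x y * (t * c x y) = t * (∑ x, ∑ y, d x y * c x y) := by
      rw [Finset.mul_sum]
      refine Finset.sum_congr rfl fun x _ => ?_
      rw [Finset.mul_sum]
      refine Finset.sum_congr rfl fun y _ => ?_
      ring
    rw [key]; ring

lemma zero_mem_dualCone (d : V → V → ℝ) : (0 : (V → ℝ) × (V → ℝ) × ℝ) ∈ dualCone d := by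
  refine ⟨fun _ _ => 0, 0, fun _ _ => le_rfl, le_rfl, ?_, ?_, ?_⟩
  · funext x; simp
  · funext y; simp
  · simp

lemma single_mem_dualCone (d : V → V → ℝ) (x y : V) :
    ((Pi.single x 1 : V → ℝ), (Pi.single y 1 : V → ℝ), d x y) ∈ dualCone d := by
  refine ⟨fun a b => if a = x then (if b = y then 1 else 0) else 0, 0, ?_, le_rfl, ?_, ?_, ?_⟩
  · intro a b; dsimp only; split_ifs <;> norm_num
  · funext a
    by_cases hax : a = x <;> simp [hax, Pi.single_apply]
  · funext b
    by_cases hby : b = y <;> simp [hby, Pi.single_apply, Finset.sum_ite_eq']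
  · simp [Finset.sum_ite_eq', mul_ite]

lemma unit_mem_dualCone (d : V → V → ℝ) :
    ((0 : V → ℝ), (0 : V → ℝ), (1:ℝ)) ∈ dualCone d := by
  refine ⟨fun _ _ => 0, 1, fun _ _ => le_rfl, zero_le_one, ?_, ?_, ?_⟩
  · funext a; simp
  · funext b; simp
  · simp

lemma decomp_vec (p q : V → ℝ) (C : ℝ) :
    ((p, q, C) : (V → ℝ) × (V → ℝ) × ℝ)
      = (∑ x, p x • ((Pi.single x 1 : V → ℝ), (0 : V → ℝ), (0:ℝ)))
        + (∑ y, q y • ((0 : V → ℝ), (Pi.single y 1 : V → ℝ), (0:ℝ)))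
        + C • ((0 : V → ℝ), (0 : V → ℝ), (1:ℝ)) := by
  refine Prod.ext ?_ (Prod.ext ?_ ?_)
  · show p = _
    funext j
    have : ((∑ x, p x • ((Pi.single x 1 : V → ℝ), (0 : V → ℝ), (0:ℝ)))
        + (∑ y, q y • ((0 : V → ℝ), (Pi.single y 1 : V → ℝ), (0:ℝ)))
        + C • ((0 : V → ℝ), (0 : V → ℝ), (1:ℝ))).1 j
        = ∑ x, p x * (Pi.single x 1 : V → ℝ) j := by
      simp [Prod.fst_sum, Prod.snd_sum, Finset.sum_apply]
    rw [this]
    simp [Pi.single_apply, mul_ite, Finset.sum_ite_eq]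
  · show q = _
    funext j
    have : ((∑ x, p x • ((Pi.single x 1 : V → ℝ), (0 : V → ℝ), (0:ℝ)))
        + (∑ y, q y • ((0 : V → ℝ), (Pi.single y 1 : V → ℝ), (0:ℝ)))
        + C • ((0 : V → ℝ), (0 : V → ℝ), (1:ℝ))).2.1 j
        = ∑ y, q y * (Pi.single y 1 : V → ℝ) j := by
      simp [Prod.fst_sum, Prod.snd_sum, Finset.sum_apply]
    rw [this]
    simp [Pi.single_apply, mul_ite, Finset.sum_ite_eq]
  · show C = _
    simp [Prod.snd_sum, Prod.fst_sum]

lemma decomp_single (d : V → V → ℝ) (x y : V) :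
    (((Pi.single x 1 : V → ℝ), (Pi.single y 1 : V → ℝ), d x y) : (V → ℝ) × (V → ℝ) × ℝ)
      = ((Pi.single x 1 : V → ℝ), (0 : V → ℝ), (0:ℝ))
        + ((0 : V → ℝ), (Pi.single y 1 : V → ℝ), (0:ℝ))
        + d x y • ((0 : V → ℝ), (0 : V → ℝ), (1:ℝ)) := by
  refine Prod.ext ?_ (Prod.ext ?_ ?_) <;> simp

theorem mem_closure_dualCone (d : V → V → ℝ) (hd0 : ∀ x, d x x = 0)
    (hdtri : ∀ x y z, d x z ≤ d x y + d y z)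
    (p q : V → ℝ) (hp : ∀ x, 0 ≤ p x) (hq : ∀ x, 0 ≤ q x)
    (hps : ∑ x, p x = 1) (hqs : ∑ x, q x = 1) (C : ℝ)
    (hC : ∀ f : V → ℝ, (∀ a b, f b - f a ≤ d a b) → (∑ z, f z * (q z - p z)) ≤ C) :
    ((p, q, C) : (V → ℝ) × (V → ℝ) × ℝ) ∈ closure (dualCone d) := by
  by_contra hv
  obtain ⟨f, u, hfv, hfA⟩ := geometric_hahn_banach_point_closed
    ((dualCone_convex d).closure) isClosed_closure hv
  have hu0 : u < 0 := by
    have := hfA 0 (subset_closure (zero_mem_dualCone d))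
    simpa using this
  have hge : ∀ e ∈ dualCone d, 0 ≤ f e := by
    intro e he
    by_contra hlt
    push_neg at hlt
    set t := (u - 1) / f e with ht
    have htpos : 0 ≤ t := le_of_lt (div_pos_of_neg_of_neg (by linarith) hlt)
    have := hfA (t • e) (subset_closure (dualCone_smul d he htpos))
    rw [f.map_smul, smul_eq_mul, ht, div_mul_cancel₀ _ (ne_of_lt hlt)] at this
    linarith
  set F : V → ℝ := fun x => f ((Pi.single x 1 : V → ℝ), (0 : V → ℝ), (0:ℝ)) with hF
  set G : V → ℝ := fun y => f ((0 : V → ℝ), (Pi.single y 1 : V → ℝ), (0:ℝ)) with hG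
  set lam : ℝ := f ((0 : V → ℝ), (0 : V → ℝ), (1:ℝ)) with hlam
  have hfval : f ((p, q, C) : (V → ℝ) × (V → ℝ) × ℝ)
      = ∑ x, p x * F x + ∑ y, q y * G y + C * lam := by
    rw [decomp_vec p q C]
    rw [map_add, map_add, map_sum, map_sum, f.map_smul, smul_eq_mul]
    congr 1
    congr 1
    · exact Finset.sum_congr rfl fun x _ => by rw [f.map_smul, smul_eq_mul]
    · exact Finset.sum_congr rfl fun y _ => by rw [f.map_smul, smul_eq_mul]
  have hgen : ∀ x y, 0 ≤ F x + G y + d x y * lam := by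
    intro x y
    have := hge _ (single_mem_dualCone d x y)
    rw [decomp_single d x y, map_add, map_add, f.map_smul, smul_eq_mul] at this
    exact this
  have hlam0 : 0 ≤ lam := hge _ (unit_mem_dualCone d)
  have hneg : ∑ x, p x * F x + ∑ y, q y * G y + C * lam < 0 := by
    rw [← hfval]; linarith
  rcases eq_or_lt_of_le hlam0 with hlamz | hlampos
  · -- lam = 0
    obtain ⟨y₀, -, hy₀⟩ := Finset.exists_min_image Finset.univ G ⟨Classical.arbitrary V, mem_univ _⟩
    have h1 : ∑ x, p x * F x ≥ ∑ x, p x * (-G y₀) := by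
      refine Finset.sum_le_sum fun x _ => ?_
      have := hgen x y₀
      rw [← hlamz] at this
      have : -G y₀ ≤ F x := by linarith
      exact mul_le_mul_of_nonneg_left this (hp x)
    have h2 : ∑ y, q y * G y ≥ ∑ y, q y * G y₀ := by
      refine Finset.sum_le_sum fun y _ => ?_
      exact mul_le_mul_of_nonneg_left (hy₀ y (mem_univ y)) (hq y)
    have e1 : ∑ x, p x * (-G y₀) = -G y₀ := by
      rw [← Finset.sum_mul, hps, one_mul]
    have e2 : ∑ y, q y * G y₀ = G y₀ := by
      rw [← Finset.sum_mul, hqs, one_mul]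
    rw [e1] at h1; rw [e2] at h2
    have hClam : C * lam = 0 := by rw [← hlamz]; ring
    linarith
  · -- lam > 0
    set h : V → ℝ := fun y => Finset.univ.inf' Finset.univ_nonempty (fun x => F x / lam + d x y)
      with hh
    have hLip : ∀ a b, h b - h a ≤ d a b := by
      intro a b
      obtain ⟨xa, -, hxa⟩ := Finset.exists_mem_eq_inf' (Finset.univ_nonempty)
        (fun x => F x / lam + d x a)
      have h1 : h b ≤ F xa / lam + d xa b := Finset.inf'_le _ (mem_univ xa)
      have h2 : d xa b ≤ d xa a + d a b := hdtri xa a b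
      have h3 : h a = F xa / lam + d xa a := hxa
      linarith
    have hlow : ∀ y, -G y / lam ≤ h y := by
      intro y
      refine Finset.le_inf' _ _ fun x _ => ?_
      have h1 : -G y ≤ F x + lam * d x y := by have := hgen x y; nlinarith
      calc -G y / lam ≤ (F x + lam * d x y) / lam := by gcongr
        _ = F x / lam + d x y := by field_simp
    have hup : ∀ x, h x ≤ F x / lam := by
      intro x
      have h1 : h x ≤ F x / lam + d x x := Finset.inf'_le _ (mem_univ x)
      rw [hd0 x] at h1
      simpa using h1
    have hCle := hC h hLip
    have e1 : ∑ z, h z * (q z - p z) = ∑ z, h z * q z - ∑ z, h z * p z := by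
      rw [← Finset.sum_sub_distrib]
      exact Finset.sum_congr rfl fun z _ => by ring
    have e2 : ∑ z, (-G z / lam) * q z ≤ ∑ z, h z * q z :=
      Finset.sum_le_sum fun z _ => mul_le_mul_of_nonneg_right (hlow z) (hq z)
    have e3 : ∑ z, h z * p z ≤ ∑ z, (F z / lam) * p z :=
      Finset.sum_le_sum fun z _ => mul_le_mul_of_nonneg_right (hup z) (hp z)
    have e4 : ∑ z, (-G z / lam) * q z = (-(∑ z, q z * G z)) / lam := by
      rw [← Finset.sum_neg_distrib, Finset.sum_div]
      exact Finset.sum_congr rfl fun z _ => by ring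
    have e5 : ∑ z, (F z / lam) * p z = (∑ z, p z * F z) / lam := by
      rw [Finset.sum_div]
      exact Finset.sum_congr rfl fun z _ => by ring
    rw [e1] at hCle
    rw [e4] at e2; rw [e5] at e3
    have key : (-(∑ z, q z * G z)) / lam - (∑ z, p z * F z) / lam ≤ C := by linarith
    have key2 : -(∑ z, q z * G z) - (∑ z, p z * F z) ≤ lam * C := by
      have := mul_le_mul_of_nonneg_left key (le_of_lt hlampos)
      rw [mul_sub, mul_div_cancel₀ _ (ne_of_gt hlampos), mul_div_cancel₀ _ (ne_of_gt hlampos)]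
        at this
      linarith
    nlinarith

theorem exists_coupling_of_dual (d : V → V → ℝ) (hd0 : ∀ x, d x x = 0)
    (hdtri : ∀ x y z, d x z ≤ d x y + d y z)
    (p q : V → ℝ) (hp : ∀ x, 0 ≤ p x) (hq : ∀ x, 0 ≤ q x)
    (hps : ∑ x, p x = 1) (hqs : ∑ x, q x = 1) (C : ℝ)
    (hC : ∀ f : V → ℝ, (∀ a b, f b - f a ≤ d a b) → (∑ z, f z * (q z - p z)) ≤ C) :
    ∃ π : V → V → ℝ, IsCoupling π p q ∧ ∑ x, ∑ y, d x y * π x y ≤ C := by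
  have hmem := mem_closure_dualCone d hd0 hdtri p q hp hq hps hqs C hC
  rw [mem_closure_iff_seq_limit] at hmem
  obtain ⟨a, haA, hat⟩ := hmem
  choose c s hc hs h1 h2 h3 using haA
  -- componentwise limits
  have ht1 : Tendsto (fun n => (a n).1) atTop (𝓝 p) :=
    ((continuous_fst.tendsto _).comp hat : _)
  have ht2 : Tendsto (fun n => (a n).2.1) atTop (𝓝 q) :=
    (((continuous_fst.comp continuous_snd).tendsto _).comp hat : _)
  have ht3 : Tendsto (fun n => (a n).2.2) atTop (𝓝 C) :=
    (((continuous_snd.comp continuous_snd).tendsto _).comp hat : _)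
  have ht1x : ∀ x, Tendsto (fun n => (a n).1 x) atTop (𝓝 (p x)) := fun x =>
    ((continuous_apply x).tendsto _).comp ht1
  have ht2y : ∀ y, Tendsto (fun n => (a n).2.1 y) atTop (𝓝 (q y)) := fun y =>
    ((continuous_apply y).tendsto _).comp ht2
  -- total mass tends to 1
  have httot : Tendsto (fun n => ∑ x, (a n).1 x) atTop (𝓝 1) := by
    have := tendsto_finset_sum (univ : Finset V) (fun x _ => ht1x x)
    rwa [hps] at this
  have hev : ∀ᶠ n in atTop, ∑ x, (a n).1 x < 2 :=
    httot.eventually (gt_mem_nhds (by norm_num))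
  obtain ⟨N₀, hN₀⟩ := eventually_atTop.mp hev
  -- entry bounds
  have hentry : ∀ n ≥ N₀, ∀ x y, c n x y ≤ 2 := by
    intro n hn x y
    have hrow : c n x y ≤ ∑ y', c n x y' :=
      Finset.single_le_sum (fun y' _ => hc n x y') (mem_univ y)
    have htot : ∑ y', c n x y' ≤ ∑ x', ∑ y', c n x' y' := by
      refine Finset.single_le_sum (f := fun x' => ∑ y', c n x' y') (fun x' _ => ?_) (mem_univ x)
      exact Finset.sum_nonneg fun y' _ => hc n x' y'
    have he : ∑ x', ∑ y', c n x' y' = ∑ x', (a n).1 x' :=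
      Finset.sum_congr rfl fun x' _ => by rw [h1 n]
    have := hN₀ n hn
    calc c n x y ≤ ∑ y', c n x y' := hrow
      _ ≤ ∑ x', ∑ y', c n x' y' := htot
      _ = ∑ x', (a n).1 x' := he
      _ ≤ 2 := le_of_lt this
  set b : ℕ → (V → V → ℝ) := fun k => c (k + N₀) with hb
  have hSb : ∀ k, b k ∈ Set.univ.pi (fun _ : V => Set.univ.pi (fun _ : V => Set.Icc (0:ℝ) 2)) := by
    intro k
    rw [Set.mem_univ_pi]
    intro x
    rw [Set.mem_univ_pi]
    intro y
    exact ⟨hc _ x y, hentry _ (by omega) x y⟩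
  obtain ⟨π, hπS, φ, hφ, hconv⟩ :=
    (isCompact_univ_pi (fun _ : V => isCompact_univ_pi
      (fun _ : V => isCompact_Icc))).tendsto_subseq hSb
  have hidx : Tendsto (fun k => φ k + N₀) atTop atTop := by
    refine tendsto_atTop_mono (fun k => ?_) tendsto_id
    have : k ≤ φ k := hφ.le_apply
    simp only [id_eq]
    omega
  have hentrylim : ∀ x y, Tendsto (fun k => c (φ k + N₀) x y) atTop (𝓝 (π x y)) := by
    intro x y
    have hx := tendsto_pi_nhds.mp hconv x
    exact tendsto_pi_nhds.mp hx y
  have hπnn : ∀ x y, 0 ≤ π x y := by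
    intro x y
    have := Set.mem_univ_pi.mp hπS x
    have := Set.mem_univ_pi.mp this y
    exact this.1
  have hrowlim : ∀ x, ∑ y, π x y = p x := by
    intro x
    have l1 : Tendsto (fun k => ∑ y, c (φ k + N₀) x y) atTop (𝓝 (∑ y, π x y)) :=
      tendsto_finset_sum _ (fun y _ => hentrylim x y)
    have l2 : Tendsto (fun k => ∑ y, c (φ k + N₀) x y) atTop (𝓝 (p x)) := by
      have heq : (fun k => ∑ y, c (φ k + N₀) x y) = fun k => (a (φ k + N₀)).1 x := by
        funext k; rw [h1]
      rw [heq]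
      exact (ht1x x).comp hidx
    exact tendsto_nhds_unique l1 l2
  have hcollim : ∀ y, ∑ x, π x y = q y := by
    intro y
    have l1 : Tendsto (fun k => ∑ x, c (φ k + N₀) x y) atTop (𝓝 (∑ x, π x y)) :=
      tendsto_finset_sum _ (fun x _ => hentrylim x y)
    have l2 : Tendsto (fun k => ∑ x, c (φ k + N₀) x y) atTop (𝓝 (q y)) := by
      have heq : (fun k => ∑ x, c (φ k + N₀) x y) = fun k => (a (φ k + N₀)).2.1 y := by
        funext k; rw [h2]
      rw [heq]
      exact (ht2y y).comp hidx
    exact tendsto_nhds_unique l1 l2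
  refine ⟨π, ⟨hπnn, hrowlim, hcollim⟩, ?_⟩
  have l1 : Tendsto (fun k => ∑ x, ∑ y, d x y * c (φ k + N₀) x y) atTop
      (𝓝 (∑ x, ∑ y, d x y * π x y)) := by
    refine tendsto_finset_sum _ (fun x _ => ?_)
    refine tendsto_finset_sum _ (fun y _ => ?_)
    exact (hentrylim x y).const_mul _
  have l2 : Tendsto (fun k => (a (φ k + N₀)).2.2) atTop (𝓝 C) := ht3.comp hidx
  refine le_of_tendsto_of_tendsto' l1 l2 fun k => ?_
  rw [h3]
  have := hs (φ k + N₀)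
  linarith

lemma glue_coupling (d : V → V → ℝ) (hdnn : ∀ x y, 0 ≤ d x y)
    (hdtri : ∀ x y z, d x z ≤ d x y + d y z)
    {π₁ π₂ : V → V → ℝ} {α β γ : V → ℝ}
    (h1 : IsCoupling π₁ α β) (h2 : IsCoupling π₂ β γ) :
    ∃ π₃, IsCoupling π₃ α γ ∧
      ∑ x, ∑ z, d x z * π₃ x z ≤ ∑ x, ∑ y, d x y * π₁ x y + ∑ y, ∑ z, d y z * π₂ y z := by
  obtain ⟨h1n, h1r, h1c⟩ := h1
  obtain ⟨h2n, h2r, h2c⟩ := h2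
  have hβnn : ∀ y, 0 ≤ β y := by
    intro y; rw [← h1c y]; exact Finset.sum_nonneg fun x _ => h1n x y
  have hkey1 : ∀ x y, β y = 0 → π₁ x y = 0 := by
    intro x y hy
    have h := Finset.single_le_sum (f := fun x' => π₁ x' y) (fun x' _ => h1n x' y) (mem_univ x)
    rw [h1c y, hy] at h
    linarith [h1n x y]
  have hkey2 : ∀ y z, β y = 0 → π₂ y z = 0 := by
    intro y z hy
    have h := Finset.single_le_sum (f := fun z' => π₂ y z') (fun z' _ => h2n y z') (mem_univ z)
    rw [h2r y, hy] at h
    linarith [h2n y z]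
  refine ⟨fun x z => ∑ y, if β y = 0 then 0 else π₁ x y * π₂ y z / β y, ⟨?_, ?_, ?_⟩, ?_⟩
  · intro x z
    refine Finset.sum_nonneg fun y _ => ?_
    split_ifs with hy
    · exact le_rfl
    · have hβpos : 0 < β y := lt_of_le_of_ne (hβnn y) (Ne.symm hy)
      exact div_nonneg (mul_nonneg (h1n x y) (h2n y z)) (le_of_lt hβpos)
  · intro x
    dsimp only
    rw [Finset.sum_comm]
    rw [← h1r x]
    refine Finset.sum_congr rfl fun y _ => ?_
    by_cases hy : β y = 0
    · simp [hy, hkey1 x y hy]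
    · rw [Finset.sum_congr rfl (fun z _ => if_neg hy)]
      rw [← Finset.sum_div, ← Finset.mul_sum, h2r y]
      field_simp
  · intro z
    dsimp only
    rw [Finset.sum_comm]
    rw [← h2c z]
    refine Finset.sum_congr rfl fun y _ => ?_
    by_cases hy : β y = 0
    · simp [hy, hkey2 y z hy]
    · rw [Finset.sum_congr rfl (fun x _ => if_neg hy)]
      have : ∑ x, π₁ x y * π₂ y z / β y = (∑ x, π₁ x y) * π₂ y z / β y := by
        rw [Finset.sum_mul, Finset.sum_div]
      rw [this, h1c y]
      field_simp
  · dsimp only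
    have step1 : ∀ x z, d x z * (∑ y, if β y = 0 then 0 else π₁ x y * π₂ y z / β y)
        ≤ ∑ y, (if β y = 0 then 0 else (d x y + d y z) * (π₁ x y * π₂ y z / β y)) := by
      intro x z
      rw [Finset.mul_sum]
      refine Finset.sum_le_sum fun y _ => ?_
      split_ifs with hy
      · simp
      · have hβpos : 0 < β y := lt_of_le_of_ne (hβnn y) (Ne.symm hy)
        have hw : 0 ≤ π₁ x y * π₂ y z / β y :=
          div_nonneg (mul_nonneg (h1n x y) (h2n y z)) (le_of_lt hβpos)
        exact mul_le_mul_of_nonneg_right (hdtri x y z) hw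
    calc ∑ x, ∑ z, d x z * (∑ y, if β y = 0 then 0 else π₁ x y * π₂ y z / β y)
        ≤ ∑ x, ∑ z, ∑ y, (if β y = 0 then 0 else (d x y + d y z) * (π₁ x y * π₂ y z / β y)) := by
          refine Finset.sum_le_sum fun x _ => Finset.sum_le_sum fun z _ => step1 x z
      _ = ∑ y, ∑ x, ∑ z, (if β y = 0 then 0 else (d x y + d y z) * (π₁ x y * π₂ y z / β y)) :=
          (Finset.sum_congr rfl fun x _ => Finset.sum_comm).trans Finset.sum_comm
      _ ≤ ∑ x, ∑ y, d x y * π₁ x y + ∑ y, ∑ z, d y z * π₂ y z := ?_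
    have inner : ∀ y, (∑ x, ∑ z, (if β y = 0 then 0 else (d x y + d y z) * (π₁ x y * π₂ y z / β y)))
        ≤ (∑ x, d x y * π₁ x y) + (∑ z, d y z * π₂ y z) := by
      intro y
      by_cases hy : β y = 0
      · have hzz : ∀ x z : V, (if β y = 0 then (0:ℝ)
            else (d x y + d y z) * (π₁ x y * π₂ y z / β y)) = 0 := fun x z => if_pos hy
        simp only [hzz, Finset.sum_const_zero]
        have t1 : 0 ≤ ∑ x, d x y * π₁ x y :=
          Finset.sum_nonneg fun x _ => mul_nonneg (hdnn x y) (h1n x y)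
        have t2 : 0 ≤ ∑ z, d y z * π₂ y z :=
          Finset.sum_nonneg fun z _ => mul_nonneg (hdnn y z) (h2n y z)
        linarith
      · have hβpos : 0 < β y := lt_of_le_of_ne (hβnn y) (Ne.symm hy)
        have expand : ∀ x z, (if β y = 0 then 0 else (d x y + d y z) * (π₁ x y * π₂ y z / β y))
            = d x y * π₁ x y * π₂ y z / β y + d y z * π₁ x y * π₂ y z / β y := by
          intro x z
          rw [if_neg hy]
          ring
        have r1 : (∑ x, d x y * π₁ x y) * (∑ z, π₂ y z) / β y
            = ∑ x, ∑ z, d x y * π₁ x y * π₂ y z / β y := by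
          rw [Finset.sum_mul_sum, Finset.sum_div]
          exact Finset.sum_congr rfl fun x _ => by rw [Finset.sum_div]
        have r2 : (∑ x, π₁ x y) * (∑ z, d y z * π₂ y z) / β y
            = ∑ x, ∑ z, d y z * π₁ x y * π₂ y z / β y := by
          rw [Finset.sum_mul_sum, Finset.sum_div]
          refine Finset.sum_congr rfl fun x _ => ?_
          rw [Finset.sum_div]
          exact Finset.sum_congr rfl fun z _ => by ring
        have this2 : (∑ x, ∑ z, (if β y = 0 then 0 else (d x y + d y z) * (π₁ x y * π₂ y z / β y)))
            = (∑ x, d x y * π₁ x y) * (∑ z, π₂ y z) / β y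
              + (∑ x, π₁ x y) * (∑ z, d y z * π₂ y z) / β y := by
          simp only [expand]
          rw [r1, r2, ← Finset.sum_add_distrib]
          refine Finset.sum_congr rfl fun x _ => ?_
          rw [← Finset.sum_add_distrib]
        rw [this2, h2r y, h1c y]
        rw [mul_div_assoc, div_self hy, mul_one]
        have hfin : (β y * ∑ z, d y z * π₂ y z) / β y = ∑ z, d y z * π₂ y z := by
          field_simp
        rw [hfin]
    calc ∑ y, ∑ x, ∑ z, (if β y = 0 then 0 else (d x y + d y z) * (π₁ x y * π₂ y z / β y))
        ≤ ∑ y, ((∑ x, d x y * π₁ x y) + (∑ z, d y z * π₂ y z)) :=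
          Finset.sum_le_sum fun y _ => inner y
      _ = ∑ x, ∑ y, d x y * π₁ x y + ∑ y, ∑ z, d y z * π₂ y z := by
          rw [Finset.sum_add_distrib]
          congr 1
          exact Finset.sum_comm

lemma push_coupling (d : V → V → ℝ) (Q : V → V → ℝ) (κ : V → V → V → V → ℝ)
    (bound : V → V → ℝ)
    (hκ : ∀ x y, IsCoupling (κ x y) (fun a => Q x a) (fun b => Q y b))
    (hκc : ∀ x y, ∑ a, ∑ b, d a b * κ x y a b ≤ bound x y)
    {π : V → V → ℝ} {ν₀ ν₁ : V → ℝ} (hπ : IsCoupling π ν₀ ν₁) :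
    IsCoupling (fun a b => ∑ x, ∑ y, π x y * κ x y a b)
        (fun a => ∑ x, ν₀ x * Q x a) (fun b => ∑ y, ν₁ y * Q y b)
      ∧ ∑ a, ∑ b, d a b * (∑ x, ∑ y, π x y * κ x y a b)
          ≤ ∑ x, ∑ y, π x y * bound x y := by
  obtain ⟨hπn, hπr, hπc⟩ := hπ
  refine ⟨⟨?_, ?_, ?_⟩, ?_⟩
  · intro a b
    refine Finset.sum_nonneg fun x _ => Finset.sum_nonneg fun y _ => ?_
    exact mul_nonneg (hπn x y) ((hκ x y).1 a b)
  · intro a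
    dsimp only
    calc ∑ b, ∑ x, ∑ y, π x y * κ x y a b
        = ∑ x, ∑ b, ∑ y, π x y * κ x y a b := Finset.sum_comm
      _ = ∑ x, ∑ y, ∑ b, π x y * κ x y a b :=
          Finset.sum_congr rfl fun x _ => Finset.sum_comm
      _ = ∑ x, ∑ y, π x y * Q x a := by
          refine Finset.sum_congr rfl fun x _ => Finset.sum_congr rfl fun y _ => ?_
          rw [← Finset.mul_sum, (hκ x y).2.1 a]
      _ = ∑ x, (∑ y, π x y) * Q x a := by
          refine Finset.sum_congr rfl fun x _ => ?_
          rw [Finset.sum_mul]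
      _ = ∑ x, ν₀ x * Q x a := by
          refine Finset.sum_congr rfl fun x _ => ?_
          rw [hπr x]
  · intro b
    dsimp only
    calc ∑ a, ∑ x, ∑ y, π x y * κ x y a b
        = ∑ x, ∑ a, ∑ y, π x y * κ x y a b := Finset.sum_comm
      _ = ∑ x, ∑ y, ∑ a, π x y * κ x y a b :=
          Finset.sum_congr rfl fun x _ => Finset.sum_comm
      _ = ∑ x, ∑ y, π x y * Q y b := by
          refine Finset.sum_congr rfl fun x _ => Finset.sum_congr rfl fun y _ => ?_
          rw [← Finset.mul_sum, (hκ x y).2.2 b]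
      _ = ∑ y, ∑ x, π x y * Q y b := Finset.sum_comm
      _ = ∑ y, (∑ x, π x y) * Q y b := by
          refine Finset.sum_congr rfl fun y _ => ?_
          rw [Finset.sum_mul]
      _ = ∑ y, ν₁ y * Q y b := by
          refine Finset.sum_congr rfl fun y _ => ?_
          rw [hπc y]
  · calc ∑ a, ∑ b, d a b * (∑ x, ∑ y, π x y * κ x y a b)
        = ∑ a, ∑ b, ∑ x, ∑ y, π x y * (d a b * κ x y a b) := by
          refine Finset.sum_congr rfl fun a _ => Finset.sum_congr rfl fun b _ => ?_
          rw [Finset.mul_sum]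
          refine Finset.sum_congr rfl fun x _ => ?_
          rw [Finset.mul_sum]
          refine Finset.sum_congr rfl fun y _ => ?_
          ring
      _ = ∑ a, ∑ x, ∑ b, ∑ y, π x y * (d a b * κ x y a b) :=
          Finset.sum_congr rfl fun a _ => Finset.sum_comm
      _ = ∑ x, ∑ a, ∑ b, ∑ y, π x y * (d a b * κ x y a b) := Finset.sum_comm
      _ = ∑ x, ∑ a, ∑ y, ∑ b, π x y * (d a b * κ x y a b) :=
          Finset.sum_congr rfl fun x _ => Finset.sum_congr rfl fun a _ => Finset.sum_comm
      _ = ∑ x, ∑ y, ∑ a, ∑ b, π x y * (d a b * κ x y a b) :=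
          Finset.sum_congr rfl fun x _ => Finset.sum_comm
      _ = ∑ x, ∑ y, π x y * (∑ a, ∑ b, d a b * κ x y a b) := by
          refine Finset.sum_congr rfl fun x _ => Finset.sum_congr rfl fun y _ => ?_
          rw [Finset.mul_sum]
          refine Finset.sum_congr rfl fun a _ => ?_
          rw [Finset.mul_sum]
      _ ≤ ∑ x, ∑ y, π x y * bound x y := by
          refine Finset.sum_le_sum fun x _ => Finset.sum_le_sum fun y _ => ?_
          exact mul_le_mul_of_nonneg_left (hκc x y) (hπn x y)

lemma rowsum_pos (hG : IsGraph μ) (hex : ∀ x : V, ∃ y, y ≠ x) (x : V) :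
    0 < ∑ z, μ x z := by
  obtain ⟨y, hy⟩ := hex x
  obtain ⟨n, p, hp0, hpn, hp⟩ := hG.2.2 x y
  have hn : n ≠ 0 := by
    rintro rfl
    exact hy (hpn.symm.trans hp0)
  have hedge : 0 < μ x (p 1) := by
    have := hp 0 (by omega)
    rwa [hp0] at this
  have hle : μ x (p 1) ≤ ∑ z, μ x z :=
    Finset.single_le_sum (fun z _ => hG.1 x z) (mem_univ (p 1))
  linarith

lemma ker_nonneg (hG : IsGraph μ) (x y : V) : 0 ≤ ker μ x y :=
  div_nonneg (hG.1 x y) (Finset.sum_nonneg fun z _ => hG.1 x z)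

lemma ker_rowsum (hG : IsGraph μ) (hex : ∀ x : V, ∃ y, y ≠ x) (x : V) :
    ∑ y, ker μ x y = 1 := by
  unfold ker
  rw [← Finset.sum_div]
  exact div_self (ne_of_gt (rowsum_pos hG hex x))

lemma ker_pos_iff (hG : IsGraph μ) (hex : ∀ x : V, ∃ y, y ≠ x) {x y : V} :
    0 < ker μ x y ↔ 0 < μ x y := by
  constructor
  · intro h
    by_contra hc
    push_neg at hc
    have : μ x y = 0 := le_antisymm hc (hG.1 x y)
    rw [ker, this, zero_div] at h
    linarith
  · intro h
    exact div_pos h (rowsum_pos hG hex x)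

lemma meanKer_nonneg (hG : IsGraph μ) (hP : IsPerron μ m) (x y : V) :
    0 ≤ meanKer μ m x y := by
  unfold meanKer
  have h1 := ker_nonneg hG x y
  have h2 := ker_nonneg hG y x
  have h3 := (hP.1 x).le
  have h4 := (hP.1 y).le
  positivity

lemma meanKer_rowsum (hG : IsGraph μ) (hP : IsPerron μ m) (hex : ∀ x : V, ∃ y, y ≠ x) (x : V) :
    ∑ y, meanKer μ m x y = 1 := by
  unfold meanKer
  rw [← Finset.sum_div, Finset.sum_add_distrib, ker_rowsum hG hex x, ← Finset.sum_div]
  have : ∑ y, m y * ker μ y x = m x := (hP.2.2 x).symm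
  rw [this, div_self (ne_of_gt (hP.1 x))]
  norm_num

lemma meanKer_rev (hP : IsPerron μ m) (x y : V) :
    m x * meanKer μ m x y = m y * meanKer μ m y x := by
  unfold meanKer
  have hx := ne_of_gt (hP.1 x)
  have hy := ne_of_gt (hP.1 y)
  field_simp
  ring

lemma meanKer_pos_edge (hG : IsGraph μ) (hP : IsPerron μ m) (hex : ∀ x : V, ∃ y, y ≠ x)
    {x y : V} (h : 0 < meanKer μ m x y) : 0 < μ x y ∨ 0 < μ y x := by
  unfold meanKer at h
  have h1 := ker_nonneg hG x y
  have h2 := ker_nonneg hG y x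
  have h3 := hP.1 x
  have h4 := hP.1 y
  by_contra hc
  push_neg at hc
  have k1 : ¬ (0 < ker μ x y) := fun hk => absurd ((ker_pos_iff hG hex).mp hk) (not_lt.mpr hc.1)
  have k2 : ¬ (0 < ker μ y x) := fun hk => absurd ((ker_pos_iff hG hex).mp hk) (not_lt.mpr hc.2)
  have e1 : ker μ x y = 0 := le_antisymm (not_lt.mp k1) h1
  have e2 : ker μ y x = 0 := le_antisymm (not_lt.mp k2) h2
  rw [e1, e2] at h
  simp at h

lemma lap_apply (f : V → ℝ) (z : V) :
    lap μ m f z = f z - ∑ w, meanKer μ m z w * f w := by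
  unfold lap lapMat
  rw [Matrix.sub_mulVec, Matrix.one_mulVec]
  simp only [Pi.sub_apply]
  congr 1

lemma lap_eq_sum (hG : IsGraph μ) (hP : IsPerron μ m) (hex : ∀ x : V, ∃ y, y ≠ x)
    (f : V → ℝ) (z : V) :
    lap μ m f z = ∑ w, meanKer μ m z w * (f z - f w) := by
  rw [lap_apply]
  have h1 : ∑ w, meanKer μ m z w * (f z - f w)
      = (∑ w, meanKer μ m z w) * f z - ∑ w, meanKer μ m z w * f w := by
    rw [Finset.sum_mul, ← Finset.sum_sub_distrib]
    exact Finset.sum_congr rfl fun w _ => by ring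
  rw [h1, meanKer_rowsum hG hP hex z, one_mul]

lemma dist_le_of_edge (hG : IsGraph μ) (hP : IsPerron μ m) (hex : ∀ x : V, ∃ y, y ≠ x)
    (hD : ∀ x y : V, (0 < μ x y ∨ 0 < μ y x) → max (gdist μ x y) (gdist μ y x) ≤ Λ)
    {z w : V} (h : 0 < meanKer μ m z w) :
    gdist μ z w ≤ Λ ∧ gdist μ w z ≤ Λ := by
  have hedge := meanKer_pos_edge hG hP hex h
  have := hD z w hedge
  exact ⟨le_trans (le_max_left _ _) this, le_trans (le_max_right _ _) this⟩

lemma lap_bound (hG : IsGraph μ) (hP : IsPerron μ m) (hex : ∀ x : V, ∃ y, y ≠ x)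
    (hΛ : 1 ≤ Λ)
    (hD : ∀ x y : V, (0 < μ x y ∨ 0 < μ y x) → max (gdist μ x y) (gdist μ y x) ≤ Λ)
    {f : V → ℝ} (hf : ∀ a b, f b - f a ≤ gdist μ a b) (z : V) :
    -Λ ≤ lap μ m f z ∧ lap μ m f z ≤ Λ := by
  rw [lap_eq_sum hG hP hex]
  have hterm : ∀ w, meanKer μ m z w * (-Λ) ≤ meanKer μ m z w * (f z - f w)
      ∧ meanKer μ m z w * (f z - f w) ≤ meanKer μ m z w * Λ := by
    intro w
    rcases eq_or_lt_of_le (meanKer_nonneg hG hP z w) with hzero | hpos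
    · rw [← hzero]
      norm_num
    · obtain ⟨hd1, hd2⟩ := dist_le_of_edge hG hP hex hD hpos
      have l1 : f z - f w ≤ Λ := le_trans (hf w z) hd2
      have l2 : -Λ ≤ f z - f w := by have := hf z w; linarith
      exact ⟨mul_le_mul_of_nonneg_left l2 hpos.le, mul_le_mul_of_nonneg_left l1 hpos.le⟩
  constructor
  · have : ∑ w, meanKer μ m z w * (-Λ) ≤ ∑ w, meanKer μ m z w * (f z - f w) :=
      Finset.sum_le_sum fun w _ => (hterm w).1
    rwa [← Finset.sum_mul, meanKer_rowsum hG hP hex z, one_mul] at this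
  · have : ∑ w, meanKer μ m z w * (f z - f w) ≤ ∑ w, meanKer μ m z w * Λ :=
      Finset.sum_le_sum fun w _ => (hterm w).2
    rwa [← Finset.sum_mul, meanKer_rowsum hG hP hex z, one_mul] at this

lemma curvature_apply (hG : IsGraph μ) (hP : IsPerron μ m) (hex : ∀ x : V, ∃ y, y ≠ x)
    (hΛ : 1 ≤ Λ)
    (hD : ∀ x y : V, (0 < μ x y ∨ 0 < μ y x) → max (gdist μ x y) (gdist μ y x) ≤ Λ)
    (hcurv : ∀ x y : V, x ≠ y → K ≤ ricci μ m x y)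
    {x y : V} (hxy : x ≠ y) {g : V → ℝ} (hg : ∀ a b, g b - g a ≤ gdist μ a b)
    (hgrad : g y - g x = gdist μ x y) :
    K * gdist μ x y ≤ lap μ m g y - lap μ m g x := by
  have hd1 : (1:ℝ) ≤ gdist μ x y := one_le_gdist hG hxy
  have hdpos : (0:ℝ) < gdist μ x y := by linarith
  set S := {r : ℝ | ∃ f : V → ℝ, (∀ a b, f b - f a ≤ gdist μ a b) ∧
    (f y - f x) / gdist μ x y = 1 ∧
    r = (lap μ m f y - lap μ m f x) / gdist μ x y} with hS
  have hbdd : BddBelow S := by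
    refine ⟨-(2*Λ), fun r hr => ?_⟩
    obtain ⟨f, hf, -, hrval⟩ := hr
    have h1 := lap_bound hG hP hex hΛ hD hf y
    have h2 := lap_bound hG hP hex hΛ hD hf x
    have hnum : -(2*Λ) ≤ lap μ m f y - lap μ m f x := by linarith
    rw [hrval]
    rw [le_div_iff₀ hdpos]
    have hΛ0 : 0 ≤ Λ := by linarith
    nlinarith
  have hmem : (lap μ m g y - lap μ m g x) / gdist μ x y ∈ S := by
    refine ⟨g, hg, ?_, rfl⟩
    rw [hgrad]
    exact div_self (ne_of_gt hdpos)
  have hKle : K ≤ (lap μ m g y - lap μ m g x) / gdist μ x y :=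
    le_trans (hcurv x y hxy) (csInf_le hbdd hmem)
  rw [le_div_iff₀ hdpos] at hKle
  linarith [hKle]

lemma lazy_contraction (hG : IsGraph μ) (hP : IsPerron μ m) (hex : ∀ x : V, ∃ y, y ≠ x)
    (hΛ : 1 ≤ Λ)
    (hD : ∀ x y : V, (0 < μ x y ∨ 0 < μ y x) → max (gdist μ x y) (gdist μ y x) ≤ Λ)
    (hcurv : ∀ x y : V, x ≠ y → K ≤ ricci μ m x y)
    {f : V → ℝ} (hf : ∀ a b, f b - f a ≤ gdist μ a b) (x y : V) :
    (f y + ∑ w, meanKer μ m y w * f w) / 2 - (f x + ∑ w, meanKer μ m x w * f w) / 2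
      ≤ (1 - K/2) * gdist μ x y := by
  rcases eq_or_ne x y with rfl | hxy
  · rw [gdist_self]
    norm_num
  have hd1 : (1:ℝ) ≤ gdist μ x y := one_le_gdist hG hxy
  have hdpos : (0:ℝ) < gdist μ x y := by linarith
  set c : ℝ := gdist μ x y - (f y - f x) with hc
  have hc0 : 0 ≤ c := by have := hf x y; simp only [hc]; linarith
  set g : V → ℝ := fun z => max (f z) (f y + c - gdist μ z y) with hg
  have hgf : ∀ z, f z ≤ g z := fun z => le_max_left _ _
  have hgfc : ∀ z, g z ≤ f z + c := by
    intro z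
    refine max_le (by linarith) ?_
    have := hf z y
    linarith
  have hgx : g x = f x := by
    rw [hg]
    dsimp only
    refine max_eq_left ?_
    have : f y + c - gdist μ x y = f x := by rw [hc]; ring
    linarith [this.le]
  have hgy : g y = f y + c := by
    rw [hg]
    dsimp only
    rw [gdist_self, sub_zero]
    exact max_eq_right (by linarith)
  have hglip : ∀ a b, g b - g a ≤ gdist μ a b := by
    intro a b
    rw [hg]
    dsimp only
    rw [sub_le_iff_le_add]
    refine max_le ?_ ?_
    · have h1 := hf a b
      have h2 : f a ≤ max (f a) (f y + c - gdist μ a y) := le_max_left _ _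
      linarith
    · have h1 := gdist_triangle hG a b y
      have h2 : f y + c - gdist μ a y ≤ max (f a) (f y + c - gdist μ a y) := le_max_right _ _
      linarith
  have hggrad : g y - g x = gdist μ x y := by
    rw [hgx, hgy, hc]; ring
  have hcurvg := curvature_apply hG hP hex hΛ hD hcurv hxy hglip hggrad
  rw [lap_apply, lap_apply] at hcurvg
  -- 𝒫g y - 𝒫g x ≤ (1-K) d
  have hPgbound : ∑ w, meanKer μ m y w * g w - ∑ w, meanKer μ m x w * g w
      ≤ gdist μ x y - K * gdist μ x y := by
    have hgyx : g y - g x = gdist μ x y := hggrad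
    linarith
  -- monotonicity of 𝒫
  have hmono1 : ∑ w, meanKer μ m y w * f w ≤ ∑ w, meanKer μ m y w * g w :=
    Finset.sum_le_sum fun w _ =>
      mul_le_mul_of_nonneg_left (hgf w) (meanKer_nonneg hG hP y w)
  have hmono2 : ∑ w, meanKer μ m x w * g w - c ≤ ∑ w, meanKer μ m x w * f w := by
    have h1 : ∑ w, meanKer μ m x w * g w ≤ ∑ w, meanKer μ m x w * (f w + c) :=
      Finset.sum_le_sum fun w _ =>
        mul_le_mul_of_nonneg_left (hgfc w) (meanKer_nonneg hG hP x w)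
    have h2 : ∑ w, meanKer μ m x w * (f w + c)
        = (∑ w, meanKer μ m x w * f w) + c := by
      have he : ∀ w, meanKer μ m x w * (f w + c)
          = meanKer μ m x w * f w + meanKer μ m x w * c := fun w => by ring
      simp only [he]
      rw [Finset.sum_add_distrib, ← Finset.sum_mul, meanKer_rowsum hG hP hex x, one_mul]
    linarith
  have e1 : f y = g y - c := by rw [hgy]; ring
  have e2 : f x = g x := hgx.symm
  have e3 : g y - g x = gdist μ x y := hggrad
  linarith

lemma onestep_coupling (d : V → V → ℝ) (hd0 : ∀ x, d x x = 0) (Λ : ℝ) (hΛ : 0 ≤ Λ)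
    (W : V → V → ℝ) (m ρ : V → ℝ)
    (hWnn : ∀ x y, 0 ≤ W x y) (hWsym : ∀ x y, W x y = W y x)
    (hWrow : ∀ x, ∑ y, W x y = m x) (hρ : ∀ x, 0 ≤ ρ x)
    (hdW : ∀ x y, x ≠ y → 0 < W x y → d x y ≤ Λ) :
    ∃ σ, IsCoupling σ (fun x => ∑ y, W x y * ρ y) (fun x => ρ x * m x) ∧
      ∑ x, ∑ y, d x y * σ x y ≤ Λ * ∑ x, ∑ y, W x y * max (ρ y - ρ x) 0 := by
  set D : V → ℝ := fun x => (∑ y, W x y * ρ y) - ∑ y, W x y * max (ρ y - ρ x) 0 with hD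
  have hDnn : ∀ x, 0 ≤ D x := by
    intro x
    rw [hD]
    dsimp only
    rw [sub_nonneg]
    refine Finset.sum_le_sum fun y _ => ?_
    refine mul_le_mul_of_nonneg_left ?_ (hWnn x y)
    exact max_le (by linarith [hρ x]) (hρ y)
  set σ : V → V → ℝ := fun x y => W x y * max (ρ y - ρ x) 0 + (if x = y then D x else 0)
    with hσ
  refine ⟨σ, ⟨?_, ?_, ?_⟩, ?_⟩
  · intro x y
    rw [hσ]
    dsimp only
    have h1 : 0 ≤ W x y * max (ρ y - ρ x) 0 := mul_nonneg (hWnn x y) (le_max_right _ _)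
    split_ifs with h
    · linarith [hDnn x]
    · linarith
  · intro x
    rw [hσ]
    dsimp only
    rw [Finset.sum_add_distrib, Finset.sum_ite_eq univ x (fun _ => D x)]
    simp only [mem_univ, if_true]
    rw [hD]
    dsimp only
    ring
  · intro y
    rw [hσ]
    dsimp only
    rw [Finset.sum_add_distrib]
    have h2 : ∑ x, (if x = y then D x else 0) = D y := by
      rw [Finset.sum_ite_eq' univ y (fun x => D x)]
      simp
    rw [h2, hD]
    dsimp only
    have h3 : ∑ x, W x y * max (ρ y - ρ x) 0 - ∑ x', W y x' * max (ρ x' - ρ y) 0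
        = ∑ x, W x y * (ρ y - ρ x) := by
      rw [← Finset.sum_sub_distrib]
      refine Finset.sum_congr rfl fun x _ => ?_
      rw [hWsym y x, ← mul_sub]
      congr 1
      have : ρ x - ρ y = -(ρ y - ρ x) := by ring
      rw [this]
      exact max_zero_sub_max_neg_zero_eq_self (ρ y - ρ x)
    have h4 : ∑ x, W x y * (ρ y - ρ x) + ∑ x', W y x' * ρ x' = ρ y * m y := by
      have e1 : ∀ x, W x y * (ρ y - ρ x) = W x y * ρ y - W y x * ρ x := by
        intro x; rw [hWsym x y]; ring
      simp only [e1]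
      rw [Finset.sum_sub_distrib]
      have e2 : ∑ x, W x y * ρ y = m y * ρ y := by
        rw [← Finset.sum_mul]
        congr 1
        rw [← hWrow y]
        exact Finset.sum_congr rfl fun x _ => hWsym x y
      rw [e2]
      ring
    linarith
  · rw [hσ]
    dsimp only
    have hsplit : ∀ x y : V, d x y * (W x y * max (ρ y - ρ x) 0 + (if x = y then D x else 0))
        = d x y * (W x y * max (ρ y - ρ x) 0) + d x y * (if x = y then D x else 0) := by
      intro x y; ring
    simp only [hsplit]
    have hdiag : ∀ x : V, ∑ y, d x y * (if x = y then D x else 0) = 0 := by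
      intro x
      have : ∀ y, d x y * (if x = y then D x else 0) = if x = y then d x x * D x else 0 := by
        intro y
        split_ifs with h
        · rw [h]
        · ring
      simp only [this]
      rw [Finset.sum_ite_eq univ x (fun _ => d x x * D x)]
      simp [hd0 x]
    have hfull : ∑ x, ∑ y, (d x y * (W x y * max (ρ y - ρ x) 0)
          + d x y * (if x = y then D x else 0))
        = ∑ x, ∑ y, d x y * (W x y * max (ρ y - ρ x) 0) := by
      refine Finset.sum_congr rfl fun x _ => ?_
      rw [Finset.sum_add_distrib, hdiag x, add_zero]
    rw [hfull, Finset.mul_sum]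
    refine Finset.sum_le_sum fun x _ => ?_
    rw [Finset.mul_sum]
    refine Finset.sum_le_sum fun y _ => ?_
    have hprod : 0 ≤ W x y * max (ρ y - ρ x) 0 :=
      mul_nonneg (hWnn x y) (le_max_right _ _)
    rcases eq_or_lt_of_le hprod with h0 | hpos
    · rw [← h0, mul_zero, mul_zero]
    · have hxy : x ≠ y := by
        rintro rfl
        simp at hpos
      have hW : 0 < W x y := by
        rcases eq_or_lt_of_le (hWnn x y) with h | h
        · rw [← h, zero_mul] at hpos; linarith
        · exact h
      exact mul_le_mul_of_nonneg_right (hdW x y hxy hW) hprod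

lemma wass_le_of_coupling (d : V → V → ℝ) (hdnn : ∀ x y, 0 ≤ d x y)
    {ν₀ ν₁ : V → ℝ} {π : V → V → ℝ} (hπ : IsCoupling π ν₀ ν₁) :
    wass d ν₀ ν₁ ≤ ∑ x, ∑ y, d x y * π x y := by
  refine csInf_le ⟨0, fun r hr => ?_⟩ ⟨π, hπ, rfl⟩
  obtain ⟨π', hπ', hr⟩ := hr
  rw [hr]
  exact Finset.sum_nonneg fun x _ => Finset.sum_nonneg fun y _ =>
    mul_nonneg (hdnn x y) (hπ'.1 x y)

lemma wass_nonneg (d : V → V → ℝ) (hdnn : ∀ x y, 0 ≤ d x y)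
    {ν₀ ν₁ : V → ℝ} {π : V → V → ℝ} (hπ : IsCoupling π ν₀ ν₁) :
    0 ≤ wass d ν₀ ν₁ := by
  refine le_csInf ⟨_, π, hπ, rfl⟩ fun r hr => ?_
  obtain ⟨π', hπ', hr⟩ := hr
  rw [hr]
  exact Finset.sum_nonneg fun x _ => Finset.sum_nonneg fun y _ =>
    mul_nonneg (hdnn x y) (hπ'.1 x y)

lemma cs_step (w : V → V → ℝ) (ρ : V → ℝ) (hw : ∀ x y, 0 ≤ w x y) (hρ : ∀ x, 0 ≤ ρ x)
    (hw1 : ∑ x, ∑ y, ρ x * w x y = 1) (hw2 : ∑ x, ∑ y, ρ y * w x y = 1) :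
    (∑ x, ∑ y, |ρ y - ρ x| * w x y) ^ 2
      ≤ (∑ x, ∑ y, (Real.sqrt (ρ y) - Real.sqrt (ρ x)) ^ 2 * w x y)
        * (4 - ∑ x, ∑ y, (Real.sqrt (ρ y) - Real.sqrt (ρ x)) ^ 2 * w x y) := by
  set s : Finset (V × V) := univ ×ˢ univ with hs
  set f : V × V → ℝ := fun p => |Real.sqrt (ρ p.2) - Real.sqrt (ρ p.1)| * Real.sqrt (w p.1 p.2)
    with hf
  set g : V × V → ℝ := fun p => (Real.sqrt (ρ p.2) + Real.sqrt (ρ p.1)) * Real.sqrt (w p.1 p.2)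
    with hg
  have key := Finset.sum_mul_sq_le_sq_mul_sq s f g
  have hfg : ∑ p ∈ s, f p * g p = ∑ x, ∑ y, |ρ y - ρ x| * w x y := by
    rw [hs, Finset.sum_product]
    refine Finset.sum_congr rfl fun x _ => Finset.sum_congr rfl fun y _ => ?_
    rw [hf, hg]
    dsimp only
    have e1 : |Real.sqrt (ρ y) - Real.sqrt (ρ x)| * Real.sqrt (w x y)
        * ((Real.sqrt (ρ y) + Real.sqrt (ρ x)) * Real.sqrt (w x y))
        = (|Real.sqrt (ρ y) - Real.sqrt (ρ x)| * (Real.sqrt (ρ y) + Real.sqrt (ρ x)))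
          * (Real.sqrt (w x y) * Real.sqrt (w x y)) := by ring
    rw [e1, Real.mul_self_sqrt (hw x y)]
    congr 1
    have e2 : |Real.sqrt (ρ y) + Real.sqrt (ρ x)| = Real.sqrt (ρ y) + Real.sqrt (ρ x) :=
      abs_of_nonneg (by positivity)
    rw [← e2, ← abs_mul]
    congr 1
    have e3 : (Real.sqrt (ρ y) - Real.sqrt (ρ x)) * (Real.sqrt (ρ y) + Real.sqrt (ρ x))
        = Real.sqrt (ρ y) ^ 2 - Real.sqrt (ρ x) ^ 2 := by ring
    rw [e3, Real.sq_sqrt (hρ y), Real.sq_sqrt (hρ x)]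
  have hf2 : ∑ p ∈ s, f p ^ 2
      = ∑ x, ∑ y, (Real.sqrt (ρ y) - Real.sqrt (ρ x)) ^ 2 * w x y := by
    rw [hs, Finset.sum_product]
    refine Finset.sum_congr rfl fun x _ => Finset.sum_congr rfl fun y _ => ?_
    rw [hf]
    dsimp only
    rw [mul_pow, sq_abs, Real.sq_sqrt (hw x y)]
  have hg2 : ∑ p ∈ s, g p ^ 2
      = 4 - ∑ x, ∑ y, (Real.sqrt (ρ y) - Real.sqrt (ρ x)) ^ 2 * w x y := by
    have e4 : ∀ p : V × V, g p ^ 2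
        = (2 * ρ p.2 + 2 * ρ p.1 - (Real.sqrt (ρ p.2) - Real.sqrt (ρ p.1)) ^ 2) * w p.1 p.2 := by
      intro p
      rw [hg]
      dsimp only
      rw [mul_pow, Real.sq_sqrt (hw p.1 p.2)]
      congr 1
      have e5 : (Real.sqrt (ρ p.2) + Real.sqrt (ρ p.1)) ^ 2
          = 2 * Real.sqrt (ρ p.2) ^ 2 + 2 * Real.sqrt (ρ p.1) ^ 2
            - (Real.sqrt (ρ p.2) - Real.sqrt (ρ p.1)) ^ 2 := by ring
      rw [e5, Real.sq_sqrt (hρ p.2), Real.sq_sqrt (hρ p.1)]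
    simp only [e4]
    rw [hs, Finset.sum_product]
    have e6 : ∀ x y : V, (2 * ρ y + 2 * ρ x - (Real.sqrt (ρ y) - Real.sqrt (ρ x)) ^ 2) * w x y
        = 2 * (ρ y * w x y) + 2 * (ρ x * w x y)
          - (Real.sqrt (ρ y) - Real.sqrt (ρ x)) ^ 2 * w x y := by
      intro x y; ring
    simp only [e6]
    rw [show ∀ (F G H : V → V → ℝ), (∑ x, ∑ y, (2 * F x y + 2 * G x y - H x y))
        = 2 * (∑ x, ∑ y, F x y) + 2 * (∑ x, ∑ y, G x y) - ∑ x, ∑ y, H x y from ?_]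
    · rw [hw2, hw1]
      ring
    · intro F G H
      rw [Finset.mul_sum, Finset.mul_sum, ← Finset.sum_add_distrib, ← Finset.sum_sub_distrib]
      refine Finset.sum_congr rfl fun x _ => ?_
      rw [Finset.mul_sum, Finset.mul_sum, ← Finset.sum_add_distrib, ← Finset.sum_sub_distrib]
  rw [hfg, hf2, hg2] at key
  exact key

end Aux

open Filter Topology in

/-- Theorem 5.2: transportation-information inequality under a positive Ricci curvature
bound and bounded jumps, with Fisher information
`ℐ(ρ) = 2 Σ_{x,y} (√ρ(y) − √ρ(x))² 𝔪_{xy}`. -/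
theorem transport_information_inequality {V : Type*} [Fintype V] [DecidableEq V] [Nonempty V]
    (μ : V → V → ℝ) (m : V → ℝ) (K Λ : ℝ)
    (hG : IsGraph μ) (hP : IsPerron μ m) (hK : 0 < K)
    (hcurv : ∀ x y : V, x ≠ y → K ≤ ricci μ m x y) (hΛ : 1 ≤ Λ)
    (hD : ∀ x y : V, (0 < μ x y ∨ 0 < μ y x) → max (gdist μ x y) (gdist μ y x) ≤ Λ) :
    ∀ ρ : V → ℝ, (∀ x, 0 ≤ ρ x) → ∑ x, ρ x * m x = 1 →
      wass (gdist μ) m (fun x => ρ x * m x) ^ 2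
          ≤ (Λ ^ 2 / (2 * K ^ 2))
            * (2 * ∑ x, ∑ y, (Real.sqrt (ρ y) - Real.sqrt (ρ x)) ^ 2 * (m x * meanKer μ m x y))
            * (1 - (2 * ∑ x, ∑ y, (Real.sqrt (ρ y) - Real.sqrt (ρ x)) ^ 2
                * (m x * meanKer μ m x y)) / 8)
        ∧ wass (gdist μ) m (fun x => ρ x * m x) ^ 2
          ≤ (Λ ^ 2 / (2 * K ^ 2))
            * (2 * ∑ x, ∑ y, (Real.sqrt (ρ y) - Real.sqrt (ρ x)) ^ 2
                * (m x * meanKer μ m x y)) := by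
  intro ρ hρ hρsum
  classical
  have h𝔪nn : ∀ x y : V, 0 ≤ m x * meanKer μ m x y := fun x y =>
    mul_nonneg (hP.1 x).le (meanKer_nonneg hG hP x y)
  have hdnn : ∀ x y : V, 0 ≤ gdist μ x y := gdist_nonneg μ
  have hd0 : ∀ x : V, gdist μ x x = 0 := gdist_self μ
  have hdtri : ∀ x y z : V, gdist μ x z ≤ gdist μ x y + gdist μ y z := gdist_triangle hG
  set I2 : ℝ := ∑ x, ∑ y, (Real.sqrt (ρ y) - Real.sqrt (ρ x)) ^ 2 * (m x * meanKer μ m x y)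
    with hI2def
  have hI2nn : 0 ≤ I2 := by
    rw [hI2def]
    exact Finset.sum_nonneg fun x _ => Finset.sum_nonneg fun y _ =>
      mul_nonneg (sq_nonneg _) (h𝔪nn x y)
  by_cases hsub : ∀ a b : V, a = b
  · -- trivial case: V has a single point
    have hzero : I2 = 0 := by
      rw [hI2def]
      refine Finset.sum_eq_zero fun x _ => Finset.sum_eq_zero fun y _ => ?_
      rw [hsub x y, sub_self]
      ring
    haveI hsubI : Subsingleton V := ⟨hsub⟩
    letI : Unique V := uniqueOfSubsingleton (Classical.arbitrary V)
    have hm1 : m default = 1 := by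
      have := hP.2.1
      rwa [Fintype.sum_unique] at this
    have hρ1 : ρ default = 1 := by
      have := hρsum
      rw [Fintype.sum_unique, hm1, mul_one] at this
      exact this
    have hρm : ∀ y : V, ρ y * m y = m y := by
      intro y
      rw [Subsingleton.elim y default, hρ1, one_mul]
    set π : V → V → ℝ := fun x y => if x = y then m x else 0 with hπdef
    have hπ : IsCoupling π m (fun x => ρ x * m x) := by
      refine ⟨?_, ?_, ?_⟩
      · intro x y
        rw [hπdef]
        dsimp only
        split_ifs
        · exact (hP.1 x).le
        · exact le_rfl
      · intro x
        rw [Fintype.sum_unique, hπdef]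
        dsimp only
        rw [if_pos (Subsingleton.elim x default)]
      · intro y
        rw [Fintype.sum_unique, hπdef]
        dsimp only
        rw [if_pos (Subsingleton.elim default y), hρm y]
        exact congrArg m (Subsingleton.elim default y)
    have hcost : ∑ x, ∑ y, gdist μ x y * π x y = 0 := by
      refine Finset.sum_eq_zero fun x _ => ?_
      have e : ∀ y, gdist μ x y * π x y = if x = y then gdist μ x y * m x else 0 := by
        intro y
        rw [hπdef]
        dsimp only
        split_ifs <;> ring
      simp only [e]
      rw [Finset.sum_ite_eq univ x (fun y => gdist μ x y * m x)]
      simp [hd0 x]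
    have hwle : wass (gdist μ) m (fun x => ρ x * m x) ≤ 0 := by
      have := wass_le_of_coupling (gdist μ) hdnn hπ
      rwa [hcost] at this
    have hwge : 0 ≤ wass (gdist μ) m (fun x => ρ x * m x) := wass_nonneg (gdist μ) hdnn hπ
    have hw0 : wass (gdist μ) m (fun x => ρ x * m x) = 0 := le_antisymm hwle hwge
    rw [hw0, hzero]
    norm_num
  · -- main case
    push_neg at hsub
    obtain ⟨a, b, hab⟩ := hsub
    have hex : ∀ x : V, ∃ y, y ≠ x := by
      intro x
      rcases eq_or_ne x a with rfl | h
      · exact ⟨b, fun hh => hab hh.symm⟩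
      · exact ⟨a, fun hh => h hh.symm⟩
    have hPnn : ∀ x y : V, 0 ≤ meanKer μ m x y := meanKer_nonneg hG hP
    have hProw : ∀ x : V, ∑ y, meanKer μ m x y = 1 := meanKer_rowsum hG hP hex
    have hPrev : ∀ x y : V, m x * meanKer μ m x y = m y * meanKer μ m y x := meanKer_rev hP
    set Q : V → V → ℝ := fun x y => ((if x = y then (1:ℝ) else 0) + meanKer μ m x y) / 2
      with hQdef
    have hQnn : ∀ x y : V, 0 ≤ Q x y := by
      intro x y
      rw [hQdef]
      dsimp only
      have := hPnn x y
      split_ifs <;> linarith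
    have hQrow : ∀ x : V, ∑ y, Q x y = 1 := by
      intro x
      rw [hQdef]
      dsimp only
      rw [← Finset.sum_div, Finset.sum_add_distrib, hProw x,
        Finset.sum_ite_eq univ x (fun _ => (1:ℝ))]
      norm_num
    have hQsym : ∀ x y : V, m x * Q x y = m y * Q y x := by
      intro x y
      rcases eq_or_ne x y with rfl | h
      · rfl
      · rw [hQdef]
        dsimp only
        rw [if_neg h, if_neg (Ne.symm h), zero_add, zero_add,
          ← mul_div_assoc, ← mul_div_assoc, hPrev x y]
    have hQop : ∀ (f : V → ℝ) (z : V),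
        ∑ w, Q z w * f w = (f z + ∑ w, meanKer μ m z w * f w) / 2 := by
      intro f z
      rw [hQdef]
      dsimp only
      have e : ∀ w, ((if z = w then (1:ℝ) else 0) + meanKer μ m z w) / 2 * f w
          = ((if z = w then f w else 0) + meanKer μ m z w * f w) / 2 := by
        intro w
        split_ifs <;> ring
      simp only [e]
      rw [← Finset.sum_div, Finset.sum_add_distrib, Finset.sum_ite_eq univ z f]
      simp
    set r : ℝ := 1 - K / 2 with hrdef
    have hlazy : ∀ (f : V → ℝ), (∀ u v : V, f v - f u ≤ gdist μ u v) → ∀ x y : V,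
        (∑ z, f z * (Q y z - Q x z)) ≤ r * gdist μ x y := by
      intro f hf x y
      have e : ∑ z, f z * (Q y z - Q x z) = (∑ z, Q y z * f z) - ∑ z, Q x z * f z := by
        rw [← Finset.sum_sub_distrib]
        exact Finset.sum_congr rfl fun z _ => by ring
      rw [e, hQop f y, hQop f x, hrdef]
      have := lazy_contraction hG hP hex hΛ hD hcurv hf x y
      linarith
    have hr0 : 0 ≤ r := by
      have h0 := hlazy (fun _ => 0) (fun u v => by simpa using hdnn u v) a b
      have hz : ∑ z : V, (fun _ => (0:ℝ)) z * (Q b z - Q a z) = 0 := by simp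
      rw [hz] at h0
      have hd1 := one_le_gdist hG hab
      nlinarith
    have hr1 : r < 1 := by rw [hrdef]; linarith
    -- family of couplings between the rows of Q
    have hpair : ∀ x y : V, ∃ π, IsCoupling π (fun u => Q x u) (fun u => Q y u) ∧
        ∑ u, ∑ v, gdist μ u v * π u v ≤ r * gdist μ x y := by
      intro x y
      rcases eq_or_ne x y with rfl | hxy
      · refine ⟨fun u v => if u = v then Q x u else 0, ⟨?_, ?_, ?_⟩, ?_⟩
        · intro u v
          dsimp only
          split_ifs
          exacts [hQnn x u, le_rfl]
        · intro u
          simp [Finset.sum_ite_eq]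
        · intro v
          simp [Finset.sum_ite_eq']
        · have hz : ∀ u : V, ∑ v, gdist μ u v * (if u = v then Q x u else 0) = 0 := by
            intro u
            have e : ∀ v, gdist μ u v * (if u = v then Q x u else 0)
                = if u = v then gdist μ u v * Q x u else 0 := by
              intro v
              split_ifs <;> ring
            simp only [e]
            rw [Finset.sum_ite_eq univ u (fun v => gdist μ u v * Q x u)]
            simp [hd0]
          simp only [hz]
          rw [Finset.sum_const_zero, hd0 x, mul_zero]
      · refine exists_coupling_of_dual (gdist μ) hd0 hdtri _ _
          (fun u => hQnn x u) (fun u => hQnn y u) (hQrow x) (hQrow y) _ ?_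
        intro f hf
        exact hlazy f hf x y
    choose κ hκa hκb using hpair
    -- iterates of the lazy kernel
    set Qf : (V → ℝ) → V → ℝ := fun f z => ∑ w, Q z w * f w with hQfdef
    set ρseq : ℕ → V → ℝ := fun t => Qf^[t] ρ with hρseqdef
    have hρseq0 : ρseq 0 = ρ := by rw [hρseqdef]; simp
    have hρseqS : ∀ t, ρseq (t + 1) = Qf (ρseq t) := by
      intro t
      rw [hρseqdef]
      dsimp only
      rw [Function.iterate_succ_apply']
    have hρseqnn : ∀ t (z : V), 0 ≤ ρseq t z := by
      intro t
      induction t with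
      | zero => intro z; rw [hρseq0]; exact hρ z
      | succ t ih =>
        intro z
        rw [hρseqS t, hQfdef]
        exact Finset.sum_nonneg fun w _ => mul_nonneg (hQnn z w) (ih w)
    have hpushm : ∀ u : V, ∑ x, m x * Q x u = m u := by
      intro u
      have e : ∀ x, m x * Q x u = m u * Q u x := fun x => hQsym x u
      simp only [e]
      rw [← Finset.mul_sum, hQrow u, mul_one]
    have hpushρ : ∀ t (u : V), ∑ x, (ρseq t x * m x) * Q x u = ρseq (t + 1) u * m u := by
      intro t u
      have e : ∀ x, (ρseq t x * m x) * Q x u = m u * (Q u x * ρseq t x) := by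
        intro x
        calc (ρseq t x * m x) * Q x u = (m x * Q x u) * ρseq t x := by ring
          _ = (m u * Q u x) * ρseq t x := by rw [hQsym x u]
          _ = m u * (Q u x * ρseq t x) := by ring
      simp only [e]
      rw [← Finset.mul_sum, hρseqS t, hQfdef]
      dsimp only
      ring
    -- diameter
    have hprodne : ((univ ×ˢ univ : Finset (V × V))).Nonempty := ⟨(a, b), by simp⟩
    set Dm : ℝ := (univ ×ˢ univ : Finset (V × V)).sup' hprodne (fun pq => gdist μ pq.1 pq.2)
      with hDmdef
    have hdDm : ∀ x y : V, gdist μ x y ≤ Dm := by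
      intro x y
      rw [hDmdef]
      exact Finset.le_sup' (f := fun pq : V × V => gdist μ pq.1 pq.2)
        (by simp : (x, y) ∈ univ ×ˢ univ)
    -- product coupling
    set π0 : V → V → ℝ := fun x y => m x * (ρ y * m y) with hπ0def
    have hπ0 : IsCoupling π0 m (fun z => ρ z * m z) := by
      refine ⟨?_, ?_, ?_⟩
      · intro x y
        rw [hπ0def]
        exact mul_nonneg (hP.1 x).le (mul_nonneg (hρ y) (hP.1 y).le)
      · intro x
        rw [hπ0def]
        dsimp only
        rw [← Finset.mul_sum, hρsum, mul_one]
      · intro y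
        rw [hπ0def]
        dsimp only
        rw [← Finset.sum_mul, hP.2.1, one_mul]
    have hπ0cost : ∑ x, ∑ y, gdist μ x y * π0 x y ≤ Dm := by
      have h1 : ∑ x, ∑ y, gdist μ x y * π0 x y ≤ ∑ x, ∑ y, Dm * π0 x y := by
        refine Finset.sum_le_sum fun x _ => Finset.sum_le_sum fun y _ => ?_
        exact mul_le_mul_of_nonneg_right (hdDm x y) (hπ0.1 x y)
      have h2 : ∑ x, ∑ y, Dm * π0 x y = Dm := by
        have e : ∀ x, ∑ y, Dm * π0 x y = Dm * m x := by
          intro x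
          rw [← Finset.mul_sum]
          congr 1
          exact hπ0.2.1 x
        simp only [e]
        rw [← Finset.mul_sum, hP.2.1, mul_one]
      linarith
    -- iterated coupling between m and ρseq t · m
    have hiter : ∀ t : ℕ, ∃ π, IsCoupling π m (fun z => ρseq t z * m z) ∧
        ∑ x, ∑ y, gdist μ x y * π x y ≤ r ^ t * Dm := by
      intro t
      induction t with
      | zero =>
        refine ⟨π0, ⟨hπ0.1, hπ0.2.1, fun y => ?_⟩, ?_⟩
        · rw [hρseq0]
          exact hπ0.2.2 y
        · rw [pow_zero, one_mul]
          exact hπ0cost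
      | succ t ih =>
        obtain ⟨π, hπc, hπcost⟩ := ih
        obtain ⟨hΦc, hΦcost⟩ := push_coupling (gdist μ) Q κ
          (fun x y => r * gdist μ x y) hκa hκb hπc
        refine ⟨_, ⟨hΦc.1, fun u => (hΦc.2.1 u).trans (hpushm u),
          fun v => (hΦc.2.2 v).trans (hpushρ t v)⟩, ?_⟩
        have e : ∑ x, ∑ y, π x y * (r * gdist μ x y)
            = r * ∑ x, ∑ y, gdist μ x y * π x y := by
          rw [Finset.mul_sum]
          refine Finset.sum_congr rfl fun x _ => ?_
          rw [Finset.mul_sum]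
          exact Finset.sum_congr rfl fun y _ => by ring
        calc ∑ u, ∑ v, gdist μ u v * (∑ x, ∑ y, π x y * κ x y u v)
            ≤ ∑ x, ∑ y, π x y * (r * gdist μ x y) := hΦcost
          _ = r * ∑ x, ∑ y, gdist μ x y * π x y := e
          _ ≤ r * (r ^ t * Dm) := mul_le_mul_of_nonneg_left hπcost hr0
          _ = r ^ (t + 1) * Dm := by ring
    -- the one-step coupling
    set Wm : V → V → ℝ := fun x y => m x * Q x y with hWmdef
    have hWnn : ∀ x y : V, 0 ≤ Wm x y := fun x y =>
      mul_nonneg (hP.1 x).le (hQnn x y)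
    have hWsym : ∀ x y : V, Wm x y = Wm y x := fun x y => hQsym x y
    have hWrow : ∀ x : V, ∑ y, Wm x y = m x := by
      intro x
      rw [hWmdef]
      dsimp only
      rw [← Finset.mul_sum, hQrow x, mul_one]
    have hdW : ∀ x y : V, x ≠ y → 0 < Wm x y → gdist μ x y ≤ Λ := by
      intro x y hxy hW
      rw [hWmdef] at hW
      dsimp only at hW
      have hQpos : 0 < Q x y := by
        rcases eq_or_lt_of_le (hQnn x y) with h | h
        · rw [← h, mul_zero] at hW; linarith
        · exact h
      have hPpos : 0 < meanKer μ m x y := by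
        rw [hQdef] at hQpos
        dsimp only at hQpos
        rw [if_neg hxy, zero_add] at hQpos
        linarith
      exact (dist_le_of_edge hG hP hex hD hPpos).1
    obtain ⟨σ, hσc, hσcost⟩ := onestep_coupling (gdist μ) hd0 Λ (by linarith)
      Wm m ρ hWnn hWsym hWrow hρ hdW
    have h01 : ∀ x : V, ρseq 1 x = ∑ y, Q x y * ρ y := by
      intro x
      have h1 : ρseq 1 = Qf (ρseq 0) := by simpa using hρseqS 0
      rw [h1, hQfdef]
      dsimp only
      rw [hρseq0]
    have hσm : IsCoupling σ (fun z => ρseq 1 z * m z) (fun z => ρ z * m z) := by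
      refine ⟨hσc.1, fun x => (hσc.2.1 x).trans ?_, hσc.2.2⟩
      show ∑ y, Wm x y * ρ y = ρseq 1 x * m x
      have e : ∀ y, Wm x y * ρ y = m x * (Q x y * ρ y) := by
        intro y
        rw [hWmdef]
        dsimp only
        ring
      simp only [e]
      rw [← Finset.mul_sum, h01 x]
      ring
    -- identify the one-step cost with the gradient
    set Gs : ℝ := ∑ x, ∑ y, |ρ y - ρ x| * (m x * meanKer μ m x y) with hGsdef
    have hGsnn : 0 ≤ Gs := by
      rw [hGsdef]
      exact Finset.sum_nonneg fun x _ => Finset.sum_nonneg fun y _ =>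
        mul_nonneg (abs_nonneg _) (h𝔪nn x y)
    have hT : ∑ x, ∑ y, Wm x y * max (ρ y - ρ x) 0 = Gs / 4 := by
      have hhalf : ∀ x y : V, Wm x y * max (ρ y - ρ x) 0
          = (m x * meanKer μ m x y) * max (ρ y - ρ x) 0 / 2 := by
        intro x y
        rcases eq_or_ne x y with rfl | hxy
        · rw [sub_self]
          simp
        · rw [hWmdef, hQdef]
          dsimp only
          rw [if_neg hxy, zero_add]
          ring
      simp only [hhalf]
      have hS : ∑ x, ∑ y, (m x * meanKer μ m x y) * max (ρ y - ρ x) 0 = Gs / 2 := by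
        have hS' : ∑ x, ∑ y, (m x * meanKer μ m x y) * max (ρ x - ρ y) 0
            = ∑ x, ∑ y, (m x * meanKer μ m x y) * max (ρ y - ρ x) 0 := by
          rw [Finset.sum_comm]
          refine Finset.sum_congr rfl fun y _ => Finset.sum_congr rfl fun x _ => ?_
          rw [hPrev x y]
        have habs : ∑ x, ∑ y, (m x * meanKer μ m x y) * max (ρ y - ρ x) 0
              + ∑ x, ∑ y, (m x * meanKer μ m x y) * max (ρ x - ρ y) 0 = Gs := by
          rw [← Finset.sum_add_distrib]
          rw [hGsdef]
          refine Finset.sum_congr rfl fun x _ => ?_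
          rw [← Finset.sum_add_distrib]
          refine Finset.sum_congr rfl fun y _ => ?_
          have e : (m x * meanKer μ m x y) * max (ρ y - ρ x) 0
              + (m x * meanKer μ m x y) * max (ρ x - ρ y) 0
              = (m x * meanKer μ m x y) * (max (ρ y - ρ x) 0 + max (-(ρ y - ρ x)) 0) := by
            rw [show ρ x - ρ y = -(ρ y - ρ x) from by ring]
            ring
          rw [e, max_zero_add_max_neg_zero_eq_abs_self]
          ring
        linarith
      rw [show ∀ S : Finset V, ∀ F : V → V → ℝ, (∑ x ∈ S, ∑ y, F x y / 2)
          = (∑ x ∈ S, ∑ y, F x y) / 2 from ?_, hS]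
      · ring
      · intro S F
        rw [Finset.sum_div]
        refine Finset.sum_congr rfl fun x _ => ?_
        rw [Finset.sum_div]
    rw [hT] at hσcost
    -- one-step couplings along the chain
    have hstep : ∀ t : ℕ, ∃ π, IsCoupling π (fun z => ρseq (t + 1) z * m z)
        (fun z => ρseq t z * m z) ∧
        ∑ x, ∑ y, gdist μ x y * π x y ≤ r ^ t * (Λ * (Gs / 4)) := by
      intro t
      induction t with
      | zero =>
        refine ⟨σ, ⟨hσm.1, fun x => ?_, fun y => ?_⟩, ?_⟩
        · have h := hσm.2.1 x
          simpa using h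
        · have h := hσm.2.2 y
          rw [hρseq0]
          exact h
        · rw [pow_zero, one_mul]
          exact hσcost
      | succ t ih =>
        obtain ⟨π, hπc, hπcost⟩ := ih
        obtain ⟨hΦc, hΦcost⟩ := push_coupling (gdist μ) Q κ
          (fun x y => r * gdist μ x y) hκa hκb hπc
        refine ⟨_, ⟨hΦc.1, fun u => (hΦc.2.1 u).trans (hpushρ (t + 1) u),
          fun v => (hΦc.2.2 v).trans (hpushρ t v)⟩, ?_⟩
        have e : ∑ x, ∑ y, π x y * (r * gdist μ x y)
            = r * ∑ x, ∑ y, gdist μ x y * π x y := by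
          rw [Finset.mul_sum]
          refine Finset.sum_congr rfl fun x _ => ?_
          rw [Finset.mul_sum]
          exact Finset.sum_congr rfl fun y _ => by ring
        calc ∑ u, ∑ v, gdist μ u v * (∑ x, ∑ y, π x y * κ x y u v)
            ≤ ∑ x, ∑ y, π x y * (r * gdist μ x y) := hΦcost
          _ = r * ∑ x, ∑ y, gdist μ x y * π x y := e
          _ ≤ r * (r ^ t * (Λ * (Gs / 4))) := mul_le_mul_of_nonneg_left hπcost hr0
          _ = r ^ (t + 1) * (Λ * (Gs / 4)) := by ring
    -- chained coupling between ρseq t · m and ρ · m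
    have hchain : ∀ t : ℕ, ∃ π, IsCoupling π (fun z => ρseq t z * m z)
        (fun z => ρ z * m z) ∧
        ∑ x, ∑ y, gdist μ x y * π x y ≤ (∑ i ∈ Finset.range t, r ^ i) * (Λ * (Gs / 4)) := by
      intro t
      induction t with
      | zero =>
        refine ⟨fun x y => if x = y then ρ x * m x else 0, ⟨?_, ?_, ?_⟩, ?_⟩
        · intro x y
          dsimp only
          split_ifs
          · exact mul_nonneg (hρ x) (hP.1 x).le
          · exact le_rfl
        · intro x
          rw [hρseq0]
          simp [Finset.sum_ite_eq]
        · intro y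
          have e : ∀ x, (if x = y then ρ x * m x else 0) = if x = y then ρ y * m y else 0 := by
            intro x
            split_ifs with h
            · rw [h]
            · rfl
          simp only [e]
          simp [Finset.sum_ite_eq']
        · have hz : ∀ x : V, ∑ y, gdist μ x y * (if x = y then ρ x * m x else 0) = 0 := by
            intro x
            have e : ∀ y, gdist μ x y * (if x = y then ρ x * m x else 0)
                = if x = y then gdist μ x y * (ρ x * m x) else 0 := by
              intro y
              split_ifs <;> ring
            simp only [e]
            rw [Finset.sum_ite_eq univ x (fun y => gdist μ x y * (ρ x * m x))]
            simp [hd0]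
          simp only [hz]
          simp
      | succ t ih =>
        obtain ⟨π₂, hπ₂, hc₂⟩ := ih
        obtain ⟨π₁, hπ₁, hc₁⟩ := hstep t
        obtain ⟨π₃, hπ₃, hc₃⟩ := glue_coupling (gdist μ) hdnn hdtri hπ₁ hπ₂
        refine ⟨π₃, hπ₃, ?_⟩
        rw [Finset.sum_range_succ]
        have : (∑ i ∈ Finset.range t, r ^ i + r ^ t) * (Λ * (Gs / 4))
            = r ^ t * (Λ * (Gs / 4)) + (∑ i ∈ Finset.range t, r ^ i) * (Λ * (Gs / 4)) := by
          ring
        rw [this]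
        linarith
    -- the Wasserstein bound for each horizon N
    have hfinal : ∀ N : ℕ, wass (gdist μ) m (fun x => ρ x * m x)
        ≤ r ^ N * Dm + (∑ i ∈ Finset.range N, r ^ i) * (Λ * (Gs / 4)) := by
      intro N
      obtain ⟨π₁, hπ₁, hc₁⟩ := hiter N
      obtain ⟨π₂, hπ₂, hc₂⟩ := hchain N
      obtain ⟨π₃, hπ₃, hc₃⟩ := glue_coupling (gdist μ) hdnn hdtri hπ₁ hπ₂
      have := wass_le_of_coupling (gdist μ) hdnn hπ₃
      linarith
    have hBnn : 0 ≤ Λ * (Gs / 4) := mul_nonneg (by linarith) (by linarith)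
    have hgeom : ∀ N : ℕ, (∑ i ∈ Finset.range N, r ^ i) * (Λ * (Gs / 4))
        ≤ (2 / K) * (Λ * (Gs / 4)) := by
      intro N
      refine mul_le_mul_of_nonneg_right ?_ hBnn
      have hgm := geom_sum_mul r N
      have h1 : (∑ i ∈ Finset.range N, r ^ i) * (1 - r) = 1 - r ^ N := by
        have h2 : (∑ i ∈ Finset.range N, r ^ i) * (1 - r)
            = -((∑ i ∈ Finset.range N, r ^ i) * (r - 1)) := by ring
        rw [h2, hgm]
        ring
      have h1mr : 1 - r = K / 2 := by rw [hrdef]; ring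
      rw [h1mr] at h1
      have hK2 : 0 < K / 2 := by linarith
      have hrN : 0 ≤ r ^ N := pow_nonneg hr0 N
      have heq : (∑ i ∈ Finset.range N, r ^ i) = (1 - r ^ N) / (K / 2) :=
        (eq_div_iff (ne_of_gt hK2)).mpr h1
      rw [heq]
      calc (1 - r ^ N) / (K / 2) ≤ 1 / (K / 2) := by gcongr <;> linarith
        _ = 2 / K := by rw [one_div_div]
    have hWbound : wass (gdist μ) m (fun x => ρ x * m x) ≤ (2 / K) * (Λ * (Gs / 4)) := by
      have htend : Filter.Tendsto (fun N : ℕ => r ^ N * Dm + (2 / K) * (Λ * (Gs / 4)))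
          Filter.atTop (nhds (0 * Dm + (2 / K) * (Λ * (Gs / 4)))) :=
        ((tendsto_pow_atTop_nhds_zero_of_lt_one hr0 hr1).mul_const Dm).add_const _
      have hle : ∀ N : ℕ, wass (gdist μ) m (fun x => ρ x * m x)
          ≤ r ^ N * Dm + (2 / K) * (Λ * (Gs / 4)) := by
        intro N
        have ha1 := hfinal N
        have ha2 := hgeom N
        linarith
      have := ge_of_tendsto htend (Filter.Eventually.of_forall hle)
      rwa [zero_mul, zero_add] at this
    -- marginals for Cauchy–Schwarz
    have hw1 : ∑ x, ∑ y, ρ x * (m x * meanKer μ m x y) = 1 := by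
      have e : ∀ x, ∑ y, ρ x * (m x * meanKer μ m x y) = ρ x * m x := by
        intro x
        rw [← Finset.mul_sum, ← Finset.mul_sum, hProw x, mul_one]
      simp only [e]
      exact hρsum
    have hw2 : ∑ x, ∑ y, ρ y * (m x * meanKer μ m x y) = 1 := by
      rw [Finset.sum_comm]
      have e : ∀ y, ∑ x, ρ y * (m x * meanKer μ m x y) = ρ y * m y := by
        intro y
        have e2 : ∀ x, ρ y * (m x * meanKer μ m x y) = ρ y * (m y * meanKer μ m y x) := by
          intro x
          rw [hPrev x y]
        simp only [e2]
        rw [← Finset.mul_sum, ← Finset.mul_sum, hProw y, mul_one]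
      simp only [e]
      exact hρsum
    have hCS : Gs ^ 2 ≤ I2 * (4 - I2) := by
      have hcs := cs_step (fun x y => m x * meanKer μ m x y) ρ h𝔪nn hρ hw1 hw2
      rw [← hGsdef, ← hI2def] at hcs
      exact hcs
    have hWnn0 : 0 ≤ wass (gdist μ) m (fun x => ρ x * m x) := wass_nonneg (gdist μ) hdnn hπ0
    have hKne : (K:ℝ) ≠ 0 := ne_of_gt hK
    have hB2 : wass (gdist μ) m (fun x => ρ x * m x) ≤ Λ * Gs / (2 * K) := by
      have he : (2 / K) * (Λ * (Gs / 4)) = Λ * Gs / (2 * K) := by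
        field_simp
        ring
      rw [← he]
      exact hWbound
    have hsq : wass (gdist μ) m (fun x => ρ x * m x) ^ 2 ≤ (Λ * Gs / (2 * K)) ^ 2 :=
      pow_le_pow_left₀ hWnn0 hB2 2
    have hexp : (Λ * Gs / (2 * K)) ^ 2 = Λ ^ 2 * Gs ^ 2 / (4 * K ^ 2) := by
      field_simp
      ring
    have hchain2 : wass (gdist μ) m (fun x => ρ x * m x) ^ 2
        ≤ Λ ^ 2 * (I2 * (4 - I2)) / (4 * K ^ 2) := by
      rw [hexp] at hsq
      have h4K : (0:ℝ) < 4 * K ^ 2 := by positivity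
      have hnum : Λ ^ 2 * Gs ^ 2 ≤ Λ ^ 2 * (I2 * (4 - I2)) :=
        mul_le_mul_of_nonneg_left hCS (sq_nonneg Λ)
      have hdivle : Λ ^ 2 * Gs ^ 2 / (4 * K ^ 2) ≤ Λ ^ 2 * (I2 * (4 - I2)) / (4 * K ^ 2) := by
        gcongr
      linarith
    constructor
    · have heq2 : Λ ^ 2 / (2 * K ^ 2) * (2 * I2) * (1 - 2 * I2 / 8)
          = Λ ^ 2 * (I2 * (4 - I2)) / (4 * K ^ 2) := by
        field_simp
        ring
      linarith [hchain2, heq2.le, heq2.ge]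
    · have h2 : Λ ^ 2 * (I2 * (4 - I2)) / (4 * K ^ 2) ≤ Λ ^ 2 / (2 * K ^ 2) * (2 * I2) := by
        have hI4 : I2 * (4 - I2) ≤ 4 * I2 := by nlinarith [sq_nonneg I2]
        have hc : (0:ℝ) ≤ Λ ^ 2 / (4 * K ^ 2) := by positivity
        have h3 := mul_le_mul_of_nonneg_left hI4 hc
        have e1 : Λ ^ 2 / (4 * K ^ 2) * (I2 * (4 - I2))
            = Λ ^ 2 * (I2 * (4 - I2)) / (4 * K ^ 2) := by ring
        have e2 : Λ ^ 2 / (4 * K ^ 2) * (4 * I2) = Λ ^ 2 / (2 * K ^ 2) * (2 * I2) := by ring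
        linarith
      linarith [hchain2, h2]


end Chung
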